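/- Let (X, 𝒜, μ) be a probability space (μ(X) = 1) and let S : X → X be measure preserving, with Frobenius–Perron operator P. Then S is ergodic (every A ∈ 𝒜 with S⁻¹(A) = A satisfies μ(A) = 0 or μ(A) = 1) if and only if for every density ϑ the Cesàro averages of the iterates Pᵏϑ converge weakly to the constant function 1, i.e. for every bounded measurable ζ : X → ℝ, (1/n) Σ_{k=0}^{n-1} ∫_X (Pᵏϑ) ζ dμ → ∫_X ζ dμ as n → ∞. -/

import Mathlib

open MeasureTheory Filter Topology
open scoped ENNReal NNReal

lemma fp_withDensity_integral {X : Type*} [MeasurableSpace X] (μ : Measure X)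
    (g : X → ℝ) (hgi : Integrable g μ) (hg0 : 0 ≤ᵐ[μ] g) (ζ : X → ℝ) :
    ∫ x, ζ x ∂(μ.withDensity (fun x => ENNReal.ofReal (g x))) = ∫ x, g x * ζ x ∂μ := by
  have h1 : (fun x => ENNReal.ofReal (g x)) = fun x => ((fun x => (g x).toNNReal) x : ℝ≥0∞) := rfl
  rw [h1, integral_withDensity_eq_integral_smul₀ (f := fun x => (g x).toNNReal)
    (measurable_real_toNNReal.comp_aemeasurable hgi.aemeasurable) ζ]
  refine integral_congr_ae ?_
  filter_upwards [hg0] with x hx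
  simp [NNReal.smul_def, Real.coe_toNNReal _ hx]

lemma fp_duality {X : Type*} [MeasurableSpace X] (μ : Measure X)
    (S : X → X) (hS : Measurable S) (f g : X → ℝ)
    (hfi : Integrable f μ) (hf0 : 0 ≤ᵐ[μ] f)
    (hgi : Integrable g μ) (hg0 : 0 ≤ᵐ[μ] g)
    (hfg : ∀ A : Set X, MeasurableSet A → ∫ x in A, g x ∂μ = ∫ x in S ⁻¹' A, f x ∂μ)
    (ζ : X → ℝ) (hζ : Measurable ζ) :
    ∫ x, g x * ζ x ∂μ = ∫ x, f x * ζ (S x) ∂μ := by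
  set ν₁ : Measure X := μ.withDensity (fun x => ENNReal.ofReal (g x)) with hν₁
  set ν₂ : Measure X := μ.withDensity (fun x => ENNReal.ofReal (f x)) with hν₂
  have hmap : ν₁ = Measure.map S ν₂ := by
    refine Measure.ext fun A hA => ?_
    rw [Measure.map_apply hS hA, hν₁, hν₂, withDensity_apply _ hA,
      withDensity_apply _ (hS hA)]
    rw [← ofReal_integral_eq_lintegral_ofReal hgi.integrableOn (ae_restrict_of_ae hg0),
      ← ofReal_integral_eq_lintegral_ofReal hfi.integrableOn (ae_restrict_of_ae hf0),
      hfg A hA]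
  have key : ∫ x, ζ x ∂ν₁ = ∫ x, ζ (S x) ∂ν₂ := by
    rw [hmap]; exact integral_map hS.aemeasurable hζ.aestronglyMeasurable
  rw [← fp_withDensity_integral μ g hgi hg0 ζ, ← fp_withDensity_integral μ f hfi hf0 (fun x => ζ (S x))]
  exact key

lemma fp_iter {X : Type*} [MeasurableSpace X] (μ : Measure X)
    (S : X → X) (hS : Measurable S) (P : (X → ℝ) → (X → ℝ))
    (hP : ∀ f : X → ℝ, Integrable f μ → 0 ≤ᵐ[μ] f →
      Integrable (P f) μ ∧ 0 ≤ᵐ[μ] P f ∧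
      ∀ A : Set X, MeasurableSet A → ∫ x in A, P f x ∂μ = ∫ x in S ⁻¹' A, f x ∂μ)
    (ϑ : X → ℝ) (hϑi : Integrable ϑ μ) (hϑ0 : 0 ≤ᵐ[μ] ϑ) :
    ∀ k : ℕ, Integrable (P^[k] ϑ) μ ∧ 0 ≤ᵐ[μ] (P^[k] ϑ) ∧
      ∀ ζ : X → ℝ, Measurable ζ →
        ∫ x, (P^[k] ϑ) x * ζ x ∂μ = ∫ x, ϑ x * ζ (S^[k] x) ∂μ := by
  intro k
  induction k with
  | zero => exact ⟨hϑi, hϑ0, fun ζ hζ => rfl⟩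
  | succ k ih =>
    obtain ⟨hi, h0, hdual⟩ := ih
    have h' := hP _ hi h0
    rw [Function.iterate_succ_apply']
    refine ⟨h'.1, h'.2.1, fun ζ hζ => ?_⟩
    rw [fp_duality μ S hS _ _ hi h0 h'.1 h'.2.1 h'.2.2 ζ hζ,
      hdual (fun x => ζ (S x)) (hζ.comp hS)]
    simp [Function.iterate_succ_apply']

lemma fp_weak_limit {X : Type*} [MeasurableSpace X] (μ : Measure X) [IsProbabilityMeasure μ]
    (A : ℕ → X → ℝ) (hAm : ∀ n, AEStronglyMeasurable (A n) μ)
    (C : ℝ) (hAb : ∀ n, ∀ᵐ x ∂μ, |A n x| ≤ C)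
    (c : ℝ) (hconv : TendstoInMeasure μ A atTop (fun _ => c))
    (ϑ : X → ℝ) (hϑi : Integrable ϑ μ) :
    Tendsto (fun n => ∫ x, ϑ x * A n x ∂μ) atTop (𝓝 ((∫ x, ϑ x ∂μ) * c)) := by
  refine tendsto_of_subseq_tendsto fun ns hns => ?_
  have h1 : TendstoInMeasure μ (fun i => A (ns i)) atTop (fun _ => c) :=
    fun ε hε => (hconv ε hε).comp hns
  obtain ⟨ms, -, hae⟩ := h1.exists_seq_tendsto_ae
  refine ⟨ms, ?_⟩
  have key : Tendsto (fun i => ∫ x, ϑ x * A (ns (ms i)) x ∂μ) atTop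
      (𝓝 (∫ x, ϑ x * c ∂μ)) := by
    apply tendsto_integral_of_dominated_convergence (bound := fun x => |ϑ x| * C)
    · exact fun i => hϑi.aestronglyMeasurable.mul (hAm _)
    · exact hϑi.abs.mul_const C
    · intro i
      filter_upwards [hAb (ns (ms i))] with x hx
      rw [Real.norm_eq_abs, abs_mul]
      exact mul_le_mul_of_nonneg_left hx (abs_nonneg _)
    · filter_upwards [hae] with x hx
      exact (hx.const_mul (ϑ x))
  simpa [integral_mul_const] using key

lemma fp_coeFn_sum {X : Type*} [MeasurableSpace X] {μ : Measure X}
    (s : Finset ℕ) (F : ℕ → Lp ℝ 2 μ) :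
    ⇑(∑ i ∈ s, F i) =ᵐ[μ] fun x => ∑ i ∈ s, F i x := by
  classical
  induction s using Finset.induction_on with
  | empty => simp only [Finset.sum_empty]; exact Lp.coeFn_zero ℝ 2 μ
  | insert a s hnot ih =>
    rw [Finset.sum_insert hnot]
    filter_upwards [Lp.coeFn_add (F a) (∑ i ∈ s, F i), ih] with x h1 h2
    rw [h1, Pi.add_apply, h2, Finset.sum_insert hnot]

set_option synthInstance.maxHeartbeats 1000000 in
lemma fp_birkhoff {X : Type*} [MeasurableSpace X] (μ : Measure X) [IsProbabilityMeasure μ]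
    [Nonempty X] (S : X → X) (hErg : Ergodic S μ)
    (ζ : X → ℝ) (hζm : Measurable ζ) (C : ℝ) (hC : ∀ x, |ζ x| ≤ C) :
    ∃ c : ℝ, TendstoInMeasure μ (fun n x => birkhoffAverage ℝ S ζ n x) atTop (fun _ => c) := by
  have hSmp : MeasurePreserving S μ μ := hErg.toMeasurePreserving
  have hmem : MemLp ζ 2 μ := MemLp.of_bound hζm.aestronglyMeasurable C
    (Eventually.of_forall fun x => by rw [Real.norm_eq_abs]; exact hC x)
  set ζ₂ : Lp ℝ 2 μ := hmem.toLp ζ with hζ₂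
  set_option synthInstance.maxHeartbeats 1000000 in
  set Tli := Lp.compMeasurePreservingₗᵢ (E := ℝ) (p := 2) ℝ S hSmp with hTli
  set T := Tli.toContinuousLinearMap with hT
  have hconv := T.tendsto_birkhoffAverage_orthogonalProjection
    Tli.norm_toContinuousLinearMap_le ζ₂
  have hfixall : ∀ u : LinearMap.eqLocus (T : Lp ℝ 2 μ →ₗ[ℝ] Lp ℝ 2 μ) 1,
      T (u : Lp ℝ 2 μ) = u := by
    intro u
    have h2 := u.2
    rw [LinearMap.mem_eqLocus] at h2
    simpa using h2
  obtain ⟨g, hfix, hgconv⟩ : ∃ g : Lp ℝ 2 μ, T g = g ∧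
      Tendsto (fun n => birkhoffAverage ℝ (⇑T) _root_.id n ζ₂) atTop (𝓝 g) :=
    ⟨_, hfixall _, hconv⟩
  have hcomp : (⇑g) ∘ S =ᵐ[μ] ⇑g := by
    have h1 : ⇑(T g) =ᵐ[μ] (⇑g) ∘ S := Lp.coeFn_compMeasurePreserving g hSmp
    rw [hfix] at h1
    exact h1.symm
  obtain ⟨c, hc⟩ := hErg.ae_eq_const_of_ae_eq_comp_ae (Lp.aestronglyMeasurable g) hcomp
  refine ⟨c, ?_⟩
  -- identify iterates
  have hTk : ∀ k : ℕ, ⇑((T : Lp ℝ 2 μ → Lp ℝ 2 μ)^[k] ζ₂) =ᵐ[μ] fun x => ζ (S^[k] x) := by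
    intro k
    induction k with
    | zero => simpa using hmem.coeFn_toLp
    | succ k ih =>
      rw [Function.iterate_succ_apply']
      have h1 : ⇑(T (T^[k] ζ₂)) =ᵐ[μ] (⇑(T^[k] ζ₂)) ∘ S :=
        Lp.coeFn_compMeasurePreserving _ hSmp
      have h2 : (⇑(T^[k] ζ₂)) ∘ S =ᵐ[μ] (fun x => ζ (S^[k] x)) ∘ S :=
        hSmp.quasiMeasurePreserving.ae_eq_comp ih
      refine (h1.trans h2).trans (Eventually.of_forall fun x => ?_)
      simp [Function.comp, Function.iterate_succ_apply]
  have hae : ∀ n : ℕ, ⇑(birkhoffAverage ℝ T _root_.id n ζ₂)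
      =ᵐ[μ] fun x => birkhoffAverage ℝ S ζ n x := by
    intro n
    have h1 : birkhoffAverage ℝ T _root_.id n ζ₂
        = (n : ℝ)⁻¹ • ∑ k ∈ Finset.range n, T^[k] ζ₂ := by
      simp [birkhoffAverage, birkhoffSum]
    rw [h1]
    filter_upwards [Lp.coeFn_smul ((n:ℝ)⁻¹) (∑ k ∈ Finset.range n, T^[k] ζ₂),
      fp_coeFn_sum (Finset.range n) (fun k => T^[k] ζ₂),
      eventually_countable_forall.mpr (fun k : ℕ => hTk k)] with x h1 h2 h3
    rw [h1]
    simp only [Pi.smul_apply, h2, birkhoffAverage, birkhoffSum, smul_eq_mul]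
    congr 1
    exact Finset.sum_congr rfl fun k _ => h3 k
  -- L2 convergence implies convergence in measure
  have hL2 : Tendsto (fun n => eLpNorm ((fun x => birkhoffAverage ℝ S ζ n x) - fun _ => c) 2 μ)
      atTop (𝓝 0) := by
    have h1 := (Lp.tendsto_Lp_iff_tendsto_eLpNorm' _ _).mp hgconv
    refine h1.congr fun n => ?_
    apply eLpNorm_congr_ae
    filter_upwards [hae n, hc] with x h2 h3
    simp [h2, h3]
  have hAm : ∀ n : ℕ, AEStronglyMeasurable (fun x => birkhoffAverage ℝ S ζ n x) μ := by
    intro n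
    have heq : (fun x => birkhoffAverage ℝ S ζ n x)
        = fun x => (n:ℝ)⁻¹ * ∑ k ∈ Finset.range n, ζ (S^[k] x) := by
      funext x; simp [birkhoffAverage, birkhoffSum]
    rw [heq]
    exact ((Finset.measurable_sum _ fun k _ =>
      hζm.comp (hErg.toMeasurePreserving.measurable.iterate k)).const_mul _).aestronglyMeasurable
  exact tendstoInMeasure_of_tendsto_eLpNorm (by norm_num) hAm
    aestronglyMeasurable_const hL2

set_option maxHeartbeats 1000000 in
theorem ergodic_iff_cesaro_weak_convergence
    {X : Type*} [MeasurableSpace X] (μ : Measure X) [IsProbabilityMeasure μ]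
    (S : X → X) (hS : Measurable S)
    (hpres : ∀ A : Set X, MeasurableSet A → μ (S ⁻¹' A) = μ A)
    (P : (X → ℝ) → (X → ℝ))
    (hP : ∀ f : X → ℝ, Integrable f μ → 0 ≤ᵐ[μ] f →
      Integrable (P f) μ ∧ 0 ≤ᵐ[μ] P f ∧
      ∀ A : Set X, MeasurableSet A → ∫ x in A, P f x ∂μ = ∫ x in S ⁻¹' A, f x ∂μ) :
    (∀ A : Set X, MeasurableSet A → S ⁻¹' A = A → μ A = 0 ∨ μ A = 1)
    ↔ ∀ ϑ : X → ℝ, Integrable ϑ μ → 0 ≤ᵐ[μ] ϑ → ∫ x, ϑ x ∂μ = 1 →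
        ∀ ζ : X → ℝ, Measurable ζ → (∃ C : ℝ, ∀ x, |ζ x| ≤ C) →
          Tendsto
            (fun n : ℕ => (n : ℝ)⁻¹ * ∑ k ∈ Finset.range n, ∫ x, (P^[k] ϑ) x * ζ x ∂μ)
            atTop (𝓝 (∫ x, ζ x ∂μ)) := by
  have hne : Nonempty X := by
    rcases isEmpty_or_nonempty X with hX | hX
    · exfalso
      have h1 : μ Set.univ = 1 := measure_univ
      rw [Set.univ_eq_empty_iff.mpr hX, measure_empty] at h1
      exact zero_ne_one h1
    · exact hX
  have hSmp : MeasurePreserving S μ μ :=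
    ⟨hS, Measure.ext fun A hA => by rw [Measure.map_apply hS hA]; exact hpres A hA⟩
  constructor
  · -- forward direction
    intro h ϑ hϑi hϑ0 hϑ1 ζ hζm hζb
    obtain ⟨C, hC⟩ := hζb
    have hErg : Ergodic S μ := by
      refine ⟨hSmp, ⟨fun s hs hinv => Filter.eventuallyConst_set'.mpr ?_⟩⟩
      rcases h s hs hinv with h0 | h1
      · exact Or.inl (ae_eq_empty.mpr h0)
      · exact Or.inr (ae_eq_univ.mpr ((prob_compl_eq_zero_iff hs).mpr h1))
    obtain ⟨c, hc⟩ := fp_birkhoff μ S hErg ζ hζm C hC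
    have hC0 : 0 ≤ C := le_trans (abs_nonneg _) (hC (Classical.arbitrary X))
    have hAm : ∀ n : ℕ, AEStronglyMeasurable (fun x => birkhoffAverage ℝ S ζ n x) μ := by
      intro n
      have heq : (fun x => birkhoffAverage ℝ S ζ n x)
          = fun x => (n:ℝ)⁻¹ * ∑ k ∈ Finset.range n, ζ (S^[k] x) := by
        funext x; simp [birkhoffAverage, birkhoffSum]
      rw [heq]
      exact ((Finset.measurable_sum _ fun k _ =>
        hζm.comp (hS.iterate k)).const_mul _).aestronglyMeasurable
    have hAb : ∀ n : ℕ, ∀ x : X, |birkhoffAverage ℝ S ζ n x| ≤ C := by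
      intro n x
      rcases Nat.eq_zero_or_pos n with hn | hn
      · subst hn; simpa [birkhoffAverage] using hC0
      have hn' : (n:ℝ) ≠ 0 := by positivity
      have h1 : |birkhoffAverage ℝ S ζ n x| ≤ (n:ℝ)⁻¹ * ((n:ℝ) * C) := by
        rw [birkhoffAverage, smul_eq_mul, abs_mul, abs_inv, Nat.abs_cast]
        refine mul_le_mul_of_nonneg_left ?_ (inv_nonneg.mpr (Nat.cast_nonneg n))
        calc |birkhoffSum S ζ n x|
            ≤ ∑ k ∈ Finset.range n, |ζ (S^[k] x)| := by
              rw [birkhoffSum]; exact Finset.abs_sum_le_sum_abs _ _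
          _ ≤ ∑ k ∈ Finset.range n, C := Finset.sum_le_sum fun k _ => hC _
          _ = (n:ℝ) * C := by simp [Finset.sum_const, Finset.card_range, nsmul_eq_mul]
      calc |birkhoffAverage ℝ S ζ n x| ≤ (n:ℝ)⁻¹ * ((n:ℝ) * C) := h1
        _ = C := by field_simp
    -- identify c with ∫ ζ using the constant density 1
    have hw1 := fp_weak_limit μ (fun n x => birkhoffAverage ℝ S ζ n x) hAm C
      (fun n => Eventually.of_forall (hAb n)) c hc (fun _ => (1:ℝ)) (integrable_const 1)
    have hζint : Integrable ζ μ :=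
      (MemLp.of_bound hζm.aestronglyMeasurable C
        (Eventually.of_forall fun x => by rw [Real.norm_eq_abs]; exact hC x)
        (p := 1)).integrable le_rfl
    have hintk : ∀ k : ℕ, ∫ x, ζ (S^[k] x) ∂μ = ∫ x, ζ x ∂μ := by
      intro k
      conv_rhs => rw [← (hSmp.iterate k).map_eq]
      rw [integral_map (hS.iterate k).aemeasurable]
      rw [(hSmp.iterate k).map_eq]
      exact hζm.aestronglyMeasurable
    have hconstseq : ∀ n : ℕ, 1 ≤ n →
        ∫ x, (fun _ => (1:ℝ)) x * birkhoffAverage ℝ S ζ n x ∂μ = ∫ x, ζ x ∂μ := by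
      intro n hn
      have hn' : (n:ℝ) ≠ 0 := by positivity
      have h2 : ∫ x, birkhoffAverage ℝ S ζ n x ∂μ
          = (n:ℝ)⁻¹ * ∑ k ∈ Finset.range n, ∫ x, ζ (S^[k] x) ∂μ := by
        have h3 : ∀ x, birkhoffAverage ℝ S ζ n x
            = (n:ℝ)⁻¹ * ∑ k ∈ Finset.range n, ζ (S^[k] x) := fun x => by
          simp [birkhoffAverage, birkhoffSum]
        simp only [h3]
        rw [integral_const_mul, integral_finset_sum]
        exact fun k _ => ((hSmp.iterate k).integrable_comp hζm.aestronglyMeasurable).mpr hζint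
      simp only [one_mul, h2, hintk]
      simp [Finset.sum_const, Finset.card_range, nsmul_eq_mul]
      field_simp
    have hceq : c = ∫ x, ζ x ∂μ := by
      have hlim1 : Tendsto (fun n => ∫ x, (fun _ => (1:ℝ)) x * birkhoffAverage ℝ S ζ n x ∂μ)
          atTop (𝓝 c) := by
        have : (∫ x, (fun _ => (1:ℝ)) x ∂μ) * c = c := by simp
        rw [← this]; exact hw1
      have hlim2 : Tendsto (fun n => ∫ x, (fun _ => (1:ℝ)) x * birkhoffAverage ℝ S ζ n x ∂μ)
          atTop (𝓝 (∫ x, ζ x ∂μ)) := by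
        refine Tendsto.congr' ?_ tendsto_const_nhds
        filter_upwards [eventually_ge_atTop 1] with n hn
        exact (hconstseq n hn).symm
      exact tendsto_nhds_unique hlim1 hlim2
    -- the main sequence equals ∫ ϑ · (birkhoff average)
    have hEq : ∀ n : ℕ, (n:ℝ)⁻¹ * ∑ k ∈ Finset.range n, ∫ x, (P^[k] ϑ) x * ζ x ∂μ
        = ∫ x, ϑ x * birkhoffAverage ℝ S ζ n x ∂μ := by
      intro n
      have hiter : ∀ k : ℕ, ∫ x, (P^[k] ϑ) x * ζ x ∂μ = ∫ x, ϑ x * ζ (S^[k] x) ∂μ :=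
        fun k => (fp_iter μ S hS P hP ϑ hϑi hϑ0 k).2.2 ζ hζm
      have hint : ∀ k : ℕ, Integrable (fun x => ϑ x * ζ (S^[k] x)) μ := by
        intro k
        have h4 := hϑi.bdd_mul ((hζm.comp (hS.iterate k)).aestronglyMeasurable)
          (Eventually.of_forall fun x => by rw [Real.norm_eq_abs]; exact hC _)
        simpa [mul_comm] using h4
      calc (n:ℝ)⁻¹ * ∑ k ∈ Finset.range n, ∫ x, (P^[k] ϑ) x * ζ x ∂μ
          = (n:ℝ)⁻¹ * ∑ k ∈ Finset.range n, ∫ x, ϑ x * ζ (S^[k] x) ∂μ := by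
            rw [Finset.sum_congr rfl fun k _ => hiter k]
        _ = (n:ℝ)⁻¹ * ∫ x, ∑ k ∈ Finset.range n, ϑ x * ζ (S^[k] x) ∂μ := by
            rw [integral_finset_sum _ fun k _ => hint k]
        _ = ∫ x, (n:ℝ)⁻¹ * ∑ k ∈ Finset.range n, ϑ x * ζ (S^[k] x) ∂μ :=
            (integral_const_mul _ _).symm
        _ = ∫ x, ϑ x * birkhoffAverage ℝ S ζ n x ∂μ := by
            refine integral_congr_ae (Eventually.of_forall fun x => ?_)
            simp only [birkhoffAverage, birkhoffSum, smul_eq_mul, Finset.mul_sum]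
            exact Finset.sum_congr rfl fun k _ => by ring
    have hwϑ := fp_weak_limit μ (fun n x => birkhoffAverage ℝ S ζ n x) hAm C
      (fun n => Eventually.of_forall (hAb n)) c hc ϑ hϑi
    rw [hϑ1, one_mul, hceq] at hwϑ
    exact (funext hEq : _) ▸ hwϑ
  · -- backward direction
    intro h A hA hinv
    by_cases h0 : μ A = 0
    · exact Or.inl h0
    right
    have hAfin : μ A ≠ ⊤ := measure_ne_top μ A
    set m : ℝ := (μ A).toReal with hm_def
    have hm : 0 < m := ENNReal.toReal_pos h0 hAfin
    set ϑ : X → ℝ := A.indicator (fun _ => m⁻¹) with hϑdef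
    have hϑi : Integrable ϑ μ := (integrable_const _).indicator hA
    have hϑ0 : 0 ≤ᵐ[μ] ϑ := Eventually.of_forall fun x =>
      Set.indicator_nonneg (fun _ _ => by positivity) x
    have hϑint : ∫ x, ϑ x ∂μ = 1 := by
      rw [hϑdef, integral_indicator_const _ hA]
      simp only [measureReal_def, ← hm_def, smul_eq_mul]
      field_simp
    set ζ : X → ℝ := A.indicator (fun _ => (1:ℝ)) with hζdef
    have hζm : Measurable ζ := measurable_const.indicator hA
    have hζb : ∃ C, ∀ x, |ζ x| ≤ C :=
      ⟨1, fun x => by by_cases hx : x ∈ A <;> simp [hζdef, Set.indicator_apply, hx]⟩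
    have htend := h ϑ hϑi hϑ0 hϑint ζ hζm hζb
    have hSk : ∀ k : ℕ, S^[k] ⁻¹' A = A := by
      intro k
      induction k with
      | zero => rfl
      | succ k ih => rw [Function.iterate_succ', Set.preimage_comp, hinv, ih]
    have hterm : ∀ k : ℕ, ∫ x, (P^[k] ϑ) x * ζ x ∂μ = 1 := by
      intro k
      obtain ⟨_, _, hdual⟩ := fp_iter μ S hS P hP ϑ hϑi hϑ0 k
      rw [hdual ζ hζm]
      have hζS : ∀ x, ζ (S^[k] x) = ζ x := by
        intro x
        have hmem : S^[k] x ∈ A ↔ x ∈ A := by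
          conv_rhs => rw [← hSk k]
          simp [Set.mem_preimage]
        simp only [hζdef, Set.indicator_apply]
        by_cases hx : x ∈ A <;> simp [hx, hmem.mpr, hmem]
      have hprod : ∀ x, ϑ x * ζ (S^[k] x) = ϑ x := by
        intro x
        rw [hζS x]
        by_cases hx : x ∈ A <;> simp [hϑdef, hζdef, Set.indicator_apply, hx]
      simp only [hprod, hϑint]
    have hconst : Tendsto
        (fun n : ℕ => (n : ℝ)⁻¹ * ∑ k ∈ Finset.range n, ∫ x, (P^[k] ϑ) x * ζ x ∂μ)
        atTop (𝓝 1) := by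
      have hev : ∀ᶠ n : ℕ in atTop,
          (n : ℝ)⁻¹ * ∑ k ∈ Finset.range n, ∫ x, (P^[k] ϑ) x * ζ x ∂μ = 1 := by
        filter_upwards [eventually_ge_atTop 1] with n hn
        simp only [hterm, Finset.sum_const, Finset.card_range, nsmul_eq_mul, mul_one]
        have : (n : ℝ) ≠ 0 := by positivity
        field_simp
      exact Tendsto.congr' (hev.mono fun n hn => hn.symm) tendsto_const_nhds
    have h1 : ∫ x, ζ x ∂μ = 1 := tendsto_nhds_unique htend hconst
    have h2 : ∫ x, ζ x ∂μ = m := by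
      rw [hζdef, integral_indicator_const _ hA]; simp [hm_def, measureReal_def]
    rw [h2] at h1
    exact (ENNReal.toReal_eq_one_iff _).mp h1
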